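/- Let K be a field, let N ∈ K[X], let a_1, …, a_k be distinct nonzero elements of K, let m_0, m_1, …, m_k be positive integers, and set D := X^{m_0}·(X−a_1)^{m_1}⋯(X−a_k)^{m_k}. Let N/D = p + r/X^{m_0} + (a proper fraction with denominator (X−a_1)^{m_1}⋯(X−a_k)^{m_k}) be the ppfraction expansion of N/D with respect to (X^{m_0}, (X−a_1)^{m_1}⋯(X−a_k)^{m_k}), so deg r < m_0. For 1 ≤ i ≤ k define the polynomial s_i := Σ_{j=0}^{m_0−1} (−1)^{m_i} C(m_i−1+j, j) a_i^{−(m_i+j)} X^j. Then r ≡ N·s_1·s_2⋯s_k (mod X^{m_0}); that is, for every n with 0 ≤ n < m_0, the coefficient of X^n in r equals the coefficient of X^n in N·s_1⋯s_k. -/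

import Mathlib

open Polynomial

private lemma coeff_sumT {K : Type*} [Semiring K] (c : ℕ → K) (m0 d : ℕ) (hd : d < m0) :
    (∑ j ∈ Finset.range m0, C (c j) * X ^ j).coeff d = c d := by
  rw [finset_sum_coeff]
  simp only [coeff_C_mul, coeff_X_pow, mul_ite, mul_one, mul_zero]
  rw [Finset.sum_ite_eq (Finset.range m0)]
  simp [hd]

private lemma prod_one_mod {R : Type*} [CommRing R] (x : R) {ι : Type*} (s : Finset ι)
    (f g : ι → R) (h : ∀ i ∈ s, x ∣ f i * g i - 1) :
    x ∣ (∏ i ∈ s, f i) * (∏ i ∈ s, g i) - 1 := by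
  induction s using Finset.cons_induction with
  | empty => simp
  | cons i s hi ih =>
    rw [Finset.prod_cons, Finset.prod_cons]
    have h1 := h i (Finset.mem_cons_self i s)
    have h2 := ih (fun j hj => h j (Finset.mem_cons_of_mem hj))
    have e : (f i * ∏ j ∈ s, f j) * (g i * ∏ j ∈ s, g j) - 1 =
        (f i * g i - 1) * ((∏ j ∈ s, f j) * ∏ j ∈ s, g j) +
          ((∏ j ∈ s, f j) * (∏ j ∈ s, g j) - 1) := by ring
    rw [e]
    exact dvd_add (h1.mul_right _) h2

private lemma key_lem {K : Type*} [Field K] (a : K) (ha : a ≠ 0) (m0 : ℕ) :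
    ∀ m : ℕ, 1 ≤ m →
    (X : K[X]) ^ m0 ∣ (C a - X) ^ m *
      (∑ j ∈ Finset.range m0, C (((m - 1 + j).choose j : K) * (a ^ (m + j))⁻¹) * X ^ j) - 1 := by
  intro m hm
  induction m, hm using Nat.le_induction with
  | base =>
    rw [X_pow_dvd_iff]
    intro d hd
    rw [pow_one, coeff_sub, sub_mul, coeff_sub, coeff_C_mul]
    match d with
    | 0 =>
      simp only [coeff_sumT _ m0 0 hd, mul_coeff_zero, coeff_X_zero, zero_mul, coeff_one]
      simp [ha]
    | e + 1 =>
      rw [coeff_X_mul, coeff_sumT _ m0 (e+1) hd, coeff_sumT _ m0 e (by omega)]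
      simp only [Nat.choose_self, Nat.cast_one, one_mul, coeff_one]
      have : a * (a ^ (1 + (e + 1)))⁻¹ - (a ^ (1 + e))⁻¹ = 0 := by
        field_simp
        ring
      simp [this]
  | succ m hm1 ih =>
    have claim : (X : K[X]) ^ m0 ∣ (C a - X) *
        (∑ j ∈ Finset.range m0, C (((m + 1 - 1 + j).choose j : K) * (a ^ (m + 1 + j))⁻¹) * X ^ j) -
        (∑ j ∈ Finset.range m0, C (((m - 1 + j).choose j : K) * (a ^ (m + j))⁻¹) * X ^ j) := by
      rw [X_pow_dvd_iff]
      intro d hd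
      rw [coeff_sub, sub_mul, coeff_sub, coeff_C_mul, coeff_sumT _ m0 d hd, coeff_sumT _ m0 d hd]
      simp only [Nat.add_sub_cancel]
      match d with
      | 0 =>
        simp only [mul_coeff_zero, coeff_X_zero, zero_mul, Nat.add_zero, Nat.choose_zero_right,
          Nat.cast_one, one_mul]
        have : a * (a ^ (m + 1))⁻¹ = (a ^ m)⁻¹ := by
          field_simp
          ring
        rw [this, sub_zero, sub_self]
      | e + 1 =>
        rw [coeff_X_mul, coeff_sumT _ m0 e (by omega)]
        have hme : m - 1 + (e + 1) = m + e := by omega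
        rw [hme, show m + (e+1) = (m+e)+1 from by omega,
          show m + 1 + (e+1) = (m+e)+2 from by omega,
          show m + 1 + e = (m+e)+1 from by omega,
          Nat.choose_succ_succ (m+e) e]
        push_cast
        field_simp
        ring
    have e : (C a - X) ^ (m + 1) *
          (∑ j ∈ Finset.range m0, C (((m + 1 - 1 + j).choose j : K) * (a ^ (m + 1 + j))⁻¹) * X ^ j) - 1 =
        (C a - X) ^ m * ((C a - X) *
          (∑ j ∈ Finset.range m0, C (((m + 1 - 1 + j).choose j : K) * (a ^ (m + 1 + j))⁻¹) * X ^ j) -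
          (∑ j ∈ Finset.range m0, C (((m - 1 + j).choose j : K) * (a ^ (m + j))⁻¹) * X ^ j)) +
        ((C a - X) ^ m *
          (∑ j ∈ Finset.range m0, C (((m - 1 + j).choose j : K) * (a ^ (m + j))⁻¹) * X ^ j) - 1) := by
      ring
    rw [e]
    exact dvd_add (claim.mul_left _) ih

private lemma key_lem' {K : Type*} [Field K] (a : K) (ha : a ≠ 0) (m0 : ℕ)
    (m : ℕ) (hm : 1 ≤ m) :
    (X : K[X]) ^ m0 ∣ (X - C a) ^ m *
      (∑ j ∈ Finset.range m0,
        C ((-1 : K) ^ m * ((m - 1 + j).choose j : K) * (a ^ (m + j))⁻¹) * X ^ j) - 1 := by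
  have hk := key_lem a ha m0 m hm
  have e2 : (∑ j ∈ Finset.range m0,
      C ((-1 : K) ^ m * ((m - 1 + j).choose j : K) * (a ^ (m + j))⁻¹) * X ^ j) =
      (-1 : K[X]) ^ m *
      (∑ j ∈ Finset.range m0, C (((m - 1 + j).choose j : K) * (a ^ (m + j))⁻¹) * X ^ j) := by
    rw [Finset.mul_sum]
    apply Finset.sum_congr rfl
    intro j _
    simp only [map_mul, map_pow, map_neg, map_one]
    ring
  have e1 : (X - C a : K[X]) ^ m = (-1 : K[X]) ^ m * (C a - X) ^ m := by
    rw [← mul_pow]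
    ring_nf
  have e3 : ((-1 : K[X]) ^ m) * ((-1 : K[X]) ^ m) = 1 := by
    rw [← mul_pow]; norm_num
  rw [e1, e2, show ∀ S : K[X], (-1 : K[X]) ^ m * (C a - X) ^ m * ((-1 : K[X]) ^ m * S) - 1 =
    ((-1 : K[X]) ^ m * (-1 : K[X]) ^ m) * ((C a - X) ^ m * S) - 1 from fun S => by ring, e3,
    one_mul]
  exact hk

/-- Corollary `c-ppfraction-0`: for
`D = X^(m₀)·(X−a₁)^(m₁)⋯(X−a_k)^(m_k)` with the `aᵢ` distinct and nonzero, the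
numerator `r` of the fractional part of `N/D` with respect to `X^(m₀)` agrees
with `N·s₁⋯s_k` modulo `X^(m₀)`, where
`sᵢ = Σ_{j<m₀} (−1)^(mᵢ) C(mᵢ−1+j, j) aᵢ^{−(mᵢ+j)} X^j`. -/
theorem stmt11 {K : Type*} [Field K] (N : K[X]) (k : ℕ) (a : Fin k → K)
    (ha : Function.Injective a) (ha0 : ∀ i, a i ≠ 0)
    (m0 : ℕ) (hm0 : 0 < m0) (m : Fin k → ℕ) (hm : ∀ i, 0 < m i)
    (p r s : K[X]) (hr : r.degree < (m0 : WithBot ℕ))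
    (hs : s.degree < (∏ i, (X - C (a i)) ^ m i).degree)
    (h : algebraMap K[X] (RatFunc K) N /
        algebraMap K[X] (RatFunc K) (X ^ m0 * ∏ i, (X - C (a i)) ^ m i) =
      algebraMap K[X] (RatFunc K) p +
        algebraMap K[X] (RatFunc K) r / algebraMap K[X] (RatFunc K) (X ^ m0) +
        algebraMap K[X] (RatFunc K) s /
          algebraMap K[X] (RatFunc K) (∏ i, (X - C (a i)) ^ m i)) :
    ∀ n < m0, r.coeff n =
      (N * ∏ i, ∑ j ∈ Finset.range m0,
        C ((-1 : K) ^ m i * ((m i - 1 + j).choose j : K) * ((a i) ^ (m i + j))⁻¹) *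
          X ^ j).coeff n := by
  -- notation
  set P : K[X] := ∏ i, (X - C (a i)) ^ m i with hPdef
  set S : K[X] := ∏ i, ∑ j ∈ Finset.range m0,
    C ((-1 : K) ^ m i * ((m i - 1 + j).choose j : K) * ((a i) ^ (m i + j))⁻¹) * X ^ j with hSdef
  -- extract the polynomial identity from `h`
  have hP : P ≠ 0 :=
    Finset.prod_ne_zero_iff.mpr fun i _ => pow_ne_zero _ (X_sub_C_ne_zero _)
  have hX : ((X : K[X]) ^ m0) ≠ 0 := pow_ne_zero _ X_ne_zero
  have inj := IsFractionRing.injective K[X] (RatFunc K)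
  have hXm : algebraMap K[X] (RatFunc K) (X ^ m0) ≠ 0 := fun hc => hX (inj (by simpa using hc))
  have hPm : algebraMap K[X] (RatFunc K) P ≠ 0 :=
    fun hc => hP (inj (by simpa using hc))
  rw [map_mul, div_eq_iff (mul_ne_zero hXm hPm)] at h
  have hpoly : N = p * (X ^ m0 * P) + r * P + s * X ^ m0 := by
    have key : ∀ Pq Rq Sq XM PM : RatFunc K, XM ≠ 0 → PM ≠ 0 →
        (Pq + Rq / XM + Sq / PM) * (XM * PM) = Pq * (XM * PM) + Rq * PM + Sq * XM := by
      intro Pq Rq Sq XM PM h1 h2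
      field_simp
    apply inj
    rw [h, key _ _ _ _ _ hXm hPm]
    simp only [map_add, map_mul]
  -- the inverse congruence ∏(X - aᵢ)^(mᵢ) · ∏ sᵢ ≡ 1 (mod X^m0)
  have hinv : (X : K[X]) ^ m0 ∣ P * S - 1 := by
    apply prod_one_mod
    intro i _
    exact key_lem' (a i) (ha0 i) m0 (m i) (hm i)
  -- hence X^m0 ∣ N·S − r
  have hdvd : (X : K[X]) ^ m0 ∣ N * S - r := by
    have e : N * S - r = ((p * P + s) * S) * X ^ m0 + r * (P * S - 1) := by
      rw [hpoly]; ring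
    rw [e]
    exact dvd_add (Dvd.intro_left _ rfl) (hinv.mul_left r)
  intro n hn
  have h0 := (X_pow_dvd_iff.mp hdvd) n hn
  rw [coeff_sub, sub_eq_zero] at h0
  exact h0.symm
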